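/- arXiv:2412.18400 — 3 statements merged into one kernel-verified Lean document; each statement's English description precedes it below -/
import Mathlib

section
/- For n ≥ 2 and a weight W, the pseudometric d_W satisfies the identity of indiscernibles (i.e., d_W(π,φ) = 0 implies π = φ for all π, φ ∈ S_n), and hence is a metric, if and only if w_{i,j} > 0 for all 1 ≤ i < j ≤ n. -/
open Finset

/-- The set of index pairs `(i,j)` with `i < j`. -/
def pairs (n : ℕ) : Finset (Fin n × Fin n) :=
  Finset.univ.filter (fun p => p.1 < p.2)

/-- The discordance set of two permutations: all pairs `i < j` with
`(π_j - π_i)(φ_j - φ_i) < 0`. -/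
def dsc (n : ℕ) (π φ : Equiv.Perm (Fin n)) : Finset (Fin n × Fin n) :=
  (pairs n).filter (fun p =>
    ((π p.2 : ℤ) - (π p.1 : ℤ)) * ((φ p.2 : ℤ) - (φ p.1 : ℤ)) < 0)

/-- `W` is a weight: a strictly upper triangular matrix of nonnegative reals
with positive total sum. -/
def IsWeight (n : ℕ) (W : Fin n → Fin n → ℝ) : Prop :=
  (∀ i j : Fin n, ¬ i < j → W i j = 0) ∧ (∀ i j : Fin n, 0 ≤ W i j) ∧
    0 < ∑ p ∈ pairs n, W p.1 p.2

/-- The weighted Kendall tau distance. -/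
noncomputable def dW (n : ℕ) (W : Fin n → Fin n → ℝ) (π φ : Equiv.Perm (Fin n)) : ℝ :=
  (∑ p ∈ dsc n π φ, W p.1 p.2) / (∑ p ∈ pairs n, W p.1 p.2)

lemma key_int (a b : ℤ) (hab : a ≠ b)
    (ha : a = 0 ∨ a = 1 ∨ 2 ≤ a) (hb : b = 0 ∨ b = 1 ∨ 2 ≤ b) :
    (b - a) * ((if b = 0 then 1 else if b = 1 then 0 else b) -
        (if a = 0 then 1 else if a = 1 then 0 else a)) < 0 ↔
      (a = 0 ∨ a = 1) ∧ (b = 0 ∨ b = 1) := by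
  rcases ha with rfl | rfl | ha <;> rcases hb with rfl | rfl | hb <;>
    simp_all <;> split_ifs <;> try omega
  all_goals constructor
  all_goals intro hh
  all_goals first | omega | (exfalso; nlinarith)

lemma swap01_key (n : ℕ) (z0 z1 u v : Fin n) (hz0 : (z0:ℕ) = 0) (hz1 : (z1:ℕ) = 1)
    (huv : u ≠ v) :
    ((v:ℤ) - u) * (((Equiv.swap z0 z1 v : Fin n):ℤ) - (Equiv.swap z0 z1 u : Fin n)) < 0 ↔
      (u = z0 ∨ u = z1) ∧ (v = z0 ∨ v = z1) := by
  have hswap : ∀ w : Fin n, ((Equiv.swap z0 z1 w : Fin n):ℤ) =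
      if ((w:ℕ):ℤ) = 0 then 1 else if ((w:ℕ):ℤ) = 1 then 0 else ((w:ℕ):ℤ) := by
    intro w
    by_cases h0 : w = z0
    · subst h0; rw [Equiv.swap_apply_left]; simp [hz0, hz1]
    · by_cases h1 : w = z1
      · subst h1; rw [Equiv.swap_apply_right]; simp [hz0, hz1]
      · rw [Equiv.swap_apply_of_ne_of_ne h0 h1]
        have e0 : (w:ℕ) ≠ 0 := fun h => h0 (Fin.ext (by omega))
        have e1 : (w:ℕ) ≠ 1 := fun h => h1 (Fin.ext (by omega))
        have e0' : ((w:ℕ):ℤ) ≠ 0 := by exact_mod_cast e0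
        have e1' : ((w:ℕ):ℤ) ≠ 1 := by exact_mod_cast e1
        rw [if_neg e0', if_neg e1']
  have hu0 : u = z0 ↔ ((u:ℕ):ℤ) = 0 := by
    rw [Fin.ext_iff, hz0]; exact_mod_cast Iff.rfl
  have hu1 : u = z1 ↔ ((u:ℕ):ℤ) = 1 := by
    rw [Fin.ext_iff, hz1]; exact_mod_cast Iff.rfl
  have hv0 : v = z0 ↔ ((v:ℕ):ℤ) = 0 := by
    rw [Fin.ext_iff, hz0]; exact_mod_cast Iff.rfl
  have hv1 : v = z1 ↔ ((v:ℕ):ℤ) = 1 := by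
    rw [Fin.ext_iff, hz1]; exact_mod_cast Iff.rfl
  have hab : ((u:ℕ):ℤ) ≠ ((v:ℕ):ℤ) := by
    intro h; exact huv (Fin.ext (by exact_mod_cast h))
  rw [hswap u, hswap v, hu0, hu1, hv0, hv1]
  exact key_int _ _ hab (by omega) (by omega)

/-- For `n ≥ 2` and a weight `W`, the pseudometric `d_W` satisfies the
identity of indiscernibles (hence is a metric) iff all weights `w_{i,j}`,
`i < j`, are positive. -/
theorem dW_metric_iff (n : ℕ) (hn : 2 ≤ n) (W : Fin n → Fin n → ℝ)
    (hW : IsWeight n W) :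
    (∀ π φ : Equiv.Perm (Fin n), dW n W π φ = 0 → π = φ) ↔
      (∀ i j : Fin n, i < j → 0 < W i j) := by
  obtain ⟨hupper, hnonneg, hpos⟩ := hW
  constructor
  · -- metric → all weights positive
    intro hmet i j hij
    by_contra hle
    have hWij : W i j = 0 := le_antisymm (not_lt.mp hle) (hnonneg i j)
    set z0 : Fin n := ⟨0, by omega⟩ with hz0def
    set z1 : Fin n := ⟨1, by omega⟩ with hz1def
    have hz0 : (z0:ℕ) = 0 := rfl
    have hz1 : (z1:ℕ) = 1 := rfl
    have hz01 : z0 ≠ z1 := by intro h; rw [Fin.ext_iff] at h; omega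
    have hijne : i ≠ j := ne_of_lt hij
    set σ1 := Equiv.swap z0 i with hσ1
    set j' := σ1 j with hj'def
    have hj'z0 : j' ≠ z0 := by
      intro h
      have h2 := congrArg σ1 h
      rw [hj'def, hσ1, Equiv.swap_apply_self, Equiv.swap_apply_left] at h2
      exact hijne h2.symm
    set σ2 := Equiv.swap z1 j' with hσ2
    set τ := σ2.trans σ1 with hτ
    have hτz0 : τ z0 = i := by
      have h2 : σ2 z0 = z0 := Equiv.swap_apply_of_ne_of_ne hz01 (Ne.symm hj'z0)
      simp [hτ, Equiv.trans_apply, h2, hσ1, Equiv.swap_apply_left]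
    have hτz1 : τ z1 = j := by
      simp only [hτ, Equiv.trans_apply, hσ2, Equiv.swap_apply_left]
      rw [hj'def, hσ1, Equiv.swap_apply_self]
    set π : Equiv.Perm (Fin n) := τ.symm with hπ
    have hπi : π i = z0 := by rw [hπ, ← hτz0, Equiv.symm_apply_apply]
    have hπj : π j = z1 := by rw [hπ, ← hτz1, Equiv.symm_apply_apply]
    set φ : Equiv.Perm (Fin n) := π.trans (Equiv.swap z0 z1) with hφ
    have hdsc : dsc n π φ = {(i, j)} := by
      ext p
      obtain ⟨p1, p2⟩ := p
      simp only [dsc, pairs, Finset.mem_filter, Finset.mem_univ, true_and,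
        Finset.mem_singleton]
      constructor
      · rintro ⟨hlt, hneg⟩
        have hne : π p1 ≠ π p2 := fun h => (ne_of_lt hlt) (π.injective h)
        rw [hφ] at hneg
        simp only [Equiv.trans_apply] at hneg
        rw [swap01_key n z0 z1 (π p1) (π p2) hz0 hz1 hne] at hneg
        obtain ⟨h1, h2⟩ := hneg
        have e1 : p1 = i ∨ p1 = j := by
          rcases h1 with h | h
          · exact Or.inl (π.injective (h.trans hπi.symm))
          · exact Or.inr (π.injective (h.trans hπj.symm))
        have e2 : p2 = i ∨ p2 = j := by
          rcases h2 with h | h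
          · exact Or.inl (π.injective (h.trans hπi.symm))
          · exact Or.inr (π.injective (h.trans hπj.symm))
        rcases e1 with rfl | rfl <;> rcases e2 with rfl | rfl
        · exact absurd hlt (lt_irrefl _)
        · rfl
        · exact absurd (hlt.trans hij) (lt_irrefl _)
        · exact absurd hlt (lt_irrefl _)
      · rintro h
        rw [Prod.mk.injEq] at h
        obtain ⟨rfl, rfl⟩ := h
        refine ⟨hij, ?_⟩
        rw [hφ]
        simp only [Equiv.trans_apply, hπi, hπj, Equiv.swap_apply_left,
          Equiv.swap_apply_right]
        have c0 : ((z0 : Fin n) : ℤ) = 0 := by exact_mod_cast hz0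
        have c1 : ((z1 : Fin n) : ℤ) = 1 := by exact_mod_cast hz1
        rw [c0, c1]
        norm_num
    have hd0 : dW n W π φ = 0 := by
      rw [dW, hdsc]
      simp [hWij]
    have heq := hmet π φ hd0
    have : φ i = π i := by rw [← heq]
    rw [hφ] at this
    simp only [Equiv.trans_apply, hπi, Equiv.swap_apply_left] at this
    exact hz01 this.symm
  · -- all weights positive → identity of indiscernibles
    intro hposW π φ hd0
    have hden : (∑ p ∈ pairs n, W p.1 p.2) ≠ 0 := ne_of_gt hpos
    have hnum : ∑ p ∈ dsc n π φ, W p.1 p.2 = 0 := by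
      rw [dW, div_eq_zero_iff] at hd0
      tauto
    have hempty : dsc n π φ = ∅ := by
      by_contra hne
      obtain ⟨p, hp⟩ := Finset.nonempty_iff_ne_empty.mpr hne
      have hpp : p ∈ pairs n := Finset.mem_of_mem_filter p hp
      have hplt : p.1 < p.2 := by
        simpa [pairs] using hpp
      have hWp : W p.1 p.2 = 0 :=
        (Finset.sum_eq_zero_iff_of_nonneg
          (fun q _ => hnonneg q.1 q.2)).mp hnum p hp
      exact absurd hWp (ne_of_gt (hposW p.1 p.2 hplt))
    have hsign : ∀ a b : Fin n, a < b →
        0 ≤ ((π b : ℤ) - (π a : ℤ)) * ((φ b : ℤ) - (φ a : ℤ)) := by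
      intro a b hab
      by_contra hneg
      push_neg at hneg
      have : (a, b) ∈ dsc n π φ := by
        simp only [dsc, pairs, Finset.mem_filter, Finset.mem_univ, true_and]
        exact ⟨hab, hneg⟩
      rw [hempty] at this
      exact absurd this (Finset.notMem_empty _)
    have hcast : ∀ x y : Fin n, x < y ↔ ((x : ℤ) < (y : ℤ)) := by
      intro x y; rw [Fin.lt_def]; exact_mod_cast Iff.rfl
    set e : Equiv.Perm (Fin n) := π.symm.trans φ with he
    have hmono : StrictMono (e : Fin n → Fin n) := by
      intro u v huv
      set a := π.symm u with ha
      set b := π.symm v with hb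
      have hπa : π a = u := Equiv.apply_symm_apply π u
      have hπb : π b = v := Equiv.apply_symm_apply π v
      have hab : a ≠ b := by
        intro h
        rw [← hπa, ← hπb, h] at huv
        exact absurd huv (lt_irrefl _)
      have heu : e u = φ a := by rw [he]; rfl
      have hev : e v = φ b := by rw [he]; rfl
      have hfne : (φ a : ℤ) ≠ (φ b : ℤ) := by
        intro h
        exact hab (φ.injective (Fin.ext (by exact_mod_cast h)))
      have hπlt : (π a : ℤ) < (π b : ℤ) := by
        rw [hπa, hπb]; exact (hcast u v).mp huv
      rw [heu, hev, hcast]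
      by_contra hge
      push_neg at hge
      have hstrict : (φ b : ℤ) < (φ a : ℤ) := lt_of_le_of_ne hge (Ne.symm hfne)
      rcases lt_trichotomy a b with h | h | h
      · have hs := hsign a b h
        nlinarith
      · exact absurd h hab
      · have hs := hsign b a h
        nlinarith
    haveI : WellFoundedLT (Fin n) := inferInstance
    haveI : WellFoundedGT (Fin n) := inferInstance
    have hid : ∀ x : Fin n, e x = x := fun _ =>
      le_antisymm hmono.apply_le hmono.le_apply
    ext x : 1
    have := hid (π x)
    rw [he] at this
    simpa using this.symm
end

section
/- For every n ≥ 2, every weight W, and all π, φ ∈ S_n, one has d_W(π,φ) ≤ 1. Moreover, if w_{i,j} > 0 for all 1 ≤ i < j ≤ n (so that d_W is a metric), then d_W(π,φ) = 1 if and only if φ = π̂, the ordinal inverse of π. -/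
set_option linter.deprecated false


open Finset

/-- The ordinal inverse `π̂ = (n+1-π_1, …, n+1-π_n)` (in 0-indexed form,
`π̂ i = (n-1) - π i`). -/
def ordInv (n : ℕ) (π : Equiv.Perm (Fin n)) : Equiv.Perm (Fin n) :=
  π.trans Fin.revPerm

lemma dsc_subset (n : ℕ) (π φ : Equiv.Perm (Fin n)) : dsc n π φ ⊆ pairs n :=
  Finset.filter_subset _ _

lemma rev_cast (n : ℕ) (a : Fin n) : ((a.rev : ℕ) : ℤ) = (n : ℤ) - (a : ℤ) - 1 := by
  rw [Fin.val_rev]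
  have : (a : ℕ) + 1 ≤ n := a.isLt
  push_cast [Nat.cast_sub this]
  ring

lemma dsc_ordInv (n : ℕ) (π : Equiv.Perm (Fin n)) : dsc n π (ordInv n π) = pairs n := by
  apply Finset.Subset.antisymm (dsc_subset n π _)
  intro p hp
  simp only [dsc, Finset.mem_filter, hp, true_and]
  have hlt : p.1 < p.2 := by simpa [pairs] using hp
  have hne : (π p.1 : ℤ) ≠ (π p.2 : ℤ) := by
    intro h
    exact absurd (π.injective (Fin.val_injective (by exact_mod_cast h))) (ne_of_lt hlt)
  have h1 : ((ordInv n π) p.1 : ℤ) = (n : ℤ) - (π p.1 : ℤ) - 1 := rev_cast n (π p.1)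
  have h2 : ((ordInv n π) p.2 : ℤ) = (n : ℤ) - (π p.2 : ℤ) - 1 := rev_cast n (π p.2)
  rw [h1, h2]
  have : ((π p.2 : ℤ) - (π p.1 : ℤ)) * ((n : ℤ) - (π p.2 : ℤ) - 1 - ((n : ℤ) - (π p.1 : ℤ) - 1))
      = -((π p.2 : ℤ) - (π p.1 : ℤ))^2 := by ring
  rw [this]
  have : (π p.2 : ℤ) - (π p.1 : ℤ) ≠ 0 := sub_ne_zero.2 (Ne.symm hne)
  rw [neg_lt_zero]
  positivity

/-- main -/
theorem dW_le_one_and_eq_one_iff (n : ℕ) (hn : 2 ≤ n) (W : Fin n → Fin n → ℝ)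
    (hW : IsWeight n W) (π φ : Equiv.Perm (Fin n)) :
    dW n W π φ ≤ 1 ∧
    ((∀ i j : Fin n, i < j → 0 < W i j) → (dW n W π φ = 1 ↔ φ = ordInv n π)) := by
  obtain ⟨hzero, hnn, hpos⟩ := hW
  have hsub := dsc_subset n π φ
  have hle : ∑ p ∈ dsc n π φ, W p.1 p.2 ≤ ∑ p ∈ pairs n, W p.1 p.2 :=
    Finset.sum_le_sum_of_subset_of_nonneg hsub (fun p _ _ => hnn _ _)
  refine ⟨div_le_one_of_le₀ hle hpos.le, fun hWpos => ⟨fun h1 => ?_, fun hφ => ?_⟩⟩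
  · -- forward direction
    have hsum : ∑ p ∈ dsc n π φ, W p.1 p.2 = ∑ p ∈ pairs n, W p.1 p.2 := by
      have := (div_eq_one_iff_eq (ne_of_gt hpos)).1 h1
      exact this
    have hdiff : ∑ p ∈ pairs n \ dsc n π φ, W p.1 p.2 = 0 := by
      have := Finset.sum_sdiff (f := fun p => W p.1 p.2) hsub
      linarith
    have hempty : pairs n ⊆ dsc n π φ := by
      intro p hp
      by_contra hpd
      have hmem : p ∈ pairs n \ dsc n π φ := Finset.mem_sdiff.2 ⟨hp, hpd⟩
      have h0 : W p.1 p.2 = 0 :=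
        (Finset.sum_eq_zero_iff_of_nonneg (fun q _ => hnn _ _)).1 hdiff p hmem
      have hplt : p.1 < p.2 := by simpa [pairs] using hp
      exact absurd h0 (ne_of_gt (hWpos _ _ hplt))
    -- all pairs discordant
    have key : ∀ i j : Fin n, i < j →
        ((π j : ℤ) - (π i : ℤ)) * ((φ j : ℤ) - (φ i : ℤ)) < 0 := by
      intro i j hij
      have : (i, j) ∈ dsc n π φ := hempty (by simp [pairs, hij])
      simpa [dsc] using (Finset.mem_filter.1 this).2
    have key' : ∀ i j : Fin n, i ≠ j →
        ((π j : ℤ) - (π i : ℤ)) * ((φ j : ℤ) - (φ i : ℤ)) < 0 := by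
      intro i j hij
      rcases lt_or_gt_of_ne hij with h | h
      · exact key i j h
      · have := key j i h
        nlinarith
    -- φ ∘ π⁻¹ is strictly antitone, so rev ∘ φ ∘ π⁻¹ is strictly monotone
    set g : Fin n → Fin n := fun x => (φ (π.symm x)).rev with hg
    have hgmono : StrictMono g := by
      intro a b hab
      have hne : π.symm a ≠ π.symm b := fun h => absurd (π.symm.injective h) (ne_of_lt hab)
      have hk := key' (π.symm a) (π.symm b) hne
      rw [π.apply_symm_apply, π.apply_symm_apply] at hk
      have hba : (b : ℤ) - (a : ℤ) > 0 := by
        have : (a : ℤ) < (b : ℤ) := by exact_mod_cast hab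
        linarith
      have : (φ (π.symm b) : ℤ) < (φ (π.symm a) : ℤ) := by nlinarith
      have hlt : φ (π.symm b) < φ (π.symm a) := by exact_mod_cast this
      exact Fin.rev_lt_rev.2 hlt
    have hrange : Set.range g = Set.range (id : Fin n → Fin n) := by
      rw [Set.range_id]
      exact Set.range_eq_univ.2
        (fun y => ⟨π (φ.symm y.rev), by simp [hg]⟩)
    have hid : g = id := (hgmono.range_inj strictMono_id).1 hrange
    -- conclude φ = ordInv π
    ext x
    have := congrFun hid (π x)
    simp only [hg, Equiv.symm_apply_apply, id] at this
    have : φ x = (π x).rev := by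
      have := congrArg Fin.rev this
      rwa [Fin.rev_rev] at this
    rw [ordInv]
    simp only [Equiv.trans_apply, Fin.revPerm_apply]
    exact congrArg Fin.val this
  · subst hφ
    rw [dW, dsc_ordInv]
    exact div_self (ne_of_gt hpos)
end

section
/- Let π ≠ φ be vertices of G_n and let P: π = ψ_1, ψ_2, …, ψ_m = φ be a path in G_n (consecutive vertices adjacent, all vertices distinct), and for each k let (i_k,j_k) be the unique element of dsc(ψ_k,ψ_{k+1}). Then P is a shortest path between π and φ (i.e., m − 1 = d_{G_n}(π,φ)) if and only if the pairs (i_1,j_1), …, (i_{m−1},j_{m−1}) are pairwise distinct. -/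
open Finset

lemma dsc_comm (n : ℕ) (π φ : Equiv.Perm (Fin n)) : dsc n π φ = dsc n φ π := by
  ext p
  simp only [dsc, Finset.mem_filter]
  rw [mul_comm]

/-- The edge graph of the permutohedron of order `n`: two permutations are
adjacent iff their discordance set is a singleton. -/
def Gn (n : ℕ) : SimpleGraph (Equiv.Perm (Fin n)) where
  Adj π φ := (dsc n π φ).card = 1
  symm := by
    constructor
    intro π φ h
    rwa [dsc_comm]
  loopless := by
    constructor
    intro π h
    have he : dsc n π π = ∅ := by
      ext p
      simp only [dsc, Finset.mem_filter, Finset.notMem_empty, iff_false, not_and]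
      intro _
      exact not_lt.mpr (mul_self_nonneg _)
    rw [he] at h
    simp at h

lemma sign_xor (a c : ℤ) (ha : a ≠ 0) (hc : c ≠ 0) : a * c < 0 ↔ ¬(a < 0 ↔ c < 0) := by
  rcases ha.lt_or_gt with h | h <;> rcases hc.lt_or_gt with h' | h' <;>
    simp [h, h', asymm h, asymm h', mul_pos_of_neg_of_neg, mul_neg_of_neg_of_pos,
      mul_neg_of_pos_of_neg, mul_pos, not_lt_of_gt]

lemma val_sub_ne (n : ℕ) (x y : Fin n) (h : x ≠ y) : ((x : ℤ) - (y : ℤ)) ≠ 0 := by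
  intro hh
  apply h
  have : (x : ℤ) = (y : ℤ) := by linarith
  exact Fin.ext (by exact_mod_cast this)

lemma mem_dsc_iff (n : ℕ) (x y : Equiv.Perm (Fin n)) (p : Fin n × Fin n) (hp : p.1 < p.2) :
    p ∈ dsc n x y ↔ ¬((((x p.2 : ℕ) : ℤ) - ((x p.1 : ℕ) : ℤ)) < 0 ↔
      (((y p.2 : ℕ) : ℤ) - ((y p.1 : ℕ) : ℤ)) < 0) := by
  have hne : p.1 ≠ p.2 := ne_of_lt hp
  rw [dsc, Finset.mem_filter]
  simp only [pairs, Finset.mem_filter, Finset.mem_univ, true_and, hp]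
  rw [sign_xor _ _ (val_sub_ne n _ _ (fun h => hne.symm (x.injective h)))
    (val_sub_ne n _ _ (fun h => hne.symm (y.injective h)))]


lemma dsc_symmDiff (n : ℕ) (π ρ φ : Equiv.Perm (Fin n)) :
    dsc n π φ = symmDiff (dsc n π ρ) (dsc n ρ φ) := by
  ext p
  by_cases hp : p.1 < p.2
  · rw [Finset.mem_symmDiff, mem_dsc_iff n π φ p hp, mem_dsc_iff n π ρ p hp,
      mem_dsc_iff n ρ φ p hp]
    tauto
  · simp [Finset.mem_symmDiff, dsc, pairs, hp]

lemma exists_descent (n : ℕ) (h : Equiv.Perm (Fin n)) (hne : h ≠ 1) :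
    ∃ a b : Fin n, (b : ℕ) = (a : ℕ) + 1 ∧ h b < h a := by
  by_contra hc
  push_neg at hc
  apply hne
  match n, h, hc with
  | 0, h, hc => ext x; exact absurd x.2 (by omega)
  | (N+1), h, hc =>
    have hmono : StrictMono h := by
      rw [Fin.strictMono_iff_lt_succ]
      intro i
      have h1 : ((i.succ : Fin (N+1)) : ℕ) = ((i.castSucc : Fin (N+1)) : ℕ) + 1 := by
        simp [Fin.val_succ]
      have h2 := hc i.castSucc i.succ h1
      have h3 : h i.castSucc ≠ h i.succ := fun he => by
        have := h.injective he
        have : (i.castSucc : ℕ) = (i.succ : ℕ) := by rw [this]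
        omega
      exact lt_of_le_of_ne h2 h3
    have hid : StrictMono (id : Fin (N+1) → Fin (N+1)) := strictMono_id
    have hr : Set.range ⇑h = Set.range (id : Fin (N+1) → Fin (N+1)) := by
      rw [Set.range_eq_univ.mpr h.surjective, Set.range_id]
    have inst : WellFoundedLT (Fin (N+1)) := inferInstance
    have heq := (@StrictMono.range_inj (Fin (N+1)) (Fin (N+1)) _ _ inst _ _ hmono hid).mp hr
    ext x
    simp [congrFun heq x]

lemma swap_val (n : ℕ) (a b z : Fin n) (hb : (b : ℕ) = (a : ℕ) + 1) :
    ((Equiv.swap a b z : Fin n) : ℕ)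
      = if z = a then (b : ℕ) else if z = b then (a : ℕ) else (z : ℕ) := by
  rcases eq_or_ne z a with rfl | hz1
  · simp [Equiv.swap_apply_left]
  · rcases eq_or_ne z b with rfl | hz2
    · simp [Equiv.swap_apply_right, hz1]
    · simp [Equiv.swap_apply_of_ne_of_ne hz1 hz2, hz1, hz2]

lemma swap_sign (n : ℕ) (a b x y : Fin n) (hb : (b : ℕ) = (a : ℕ) + 1) (hxy : x ≠ y) :
    ((((Equiv.swap a b) y : Fin n) : ℤ) - (((Equiv.swap a b) x : Fin n) : ℤ))
        * (((y : ℕ) : ℤ) - ((x : ℕ) : ℤ)) < 0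
      ↔ (x = a ∧ y = b) ∨ (x = b ∧ y = a) := by
  have hA := val_sub_ne n (Equiv.swap a b y) (Equiv.swap a b x)
    (fun h => hxy.symm ((Equiv.swap a b).injective h))
  have hC := val_sub_ne n y x hxy.symm
  rw [sign_xor _ _ hA hC, Fin.ext_iff, Fin.ext_iff, Fin.ext_iff, Fin.ext_iff]
  have hxy' : (x : ℕ) ≠ (y : ℕ) := fun h => hxy (Fin.ext h)
  rw [show ((Equiv.swap a b y : Fin n) : ℤ) = (((Equiv.swap a b y : Fin n) : ℕ) : ℤ) from rfl,
    show ((Equiv.swap a b x : Fin n) : ℤ) = (((Equiv.swap a b x : Fin n) : ℕ) : ℤ) from rfl,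
    swap_val n a b y hb, swap_val n a b x hb]
  split_ifs with h1 h2 h3 h4 h5 h6 h7 h8 <;> omega

lemma symmDiff_singleton_erase {α : Type*} [DecidableEq α] (p : α) (t : Finset α)
    (hp : p ∈ t) : symmDiff ({p} : Finset α) t = t.erase p := by
  ext q
  simp only [Finset.mem_symmDiff, Finset.mem_singleton, Finset.mem_erase]
  constructor
  · rintro (⟨rfl, hq⟩ | ⟨hq, hq'⟩)
    · exact absurd hp hq
    · exact ⟨fun h => hq' (h ▸ rfl), hq⟩
  · rintro ⟨hq, hq'⟩
    exact Or.inr ⟨hq', hq⟩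

lemma step_lemma (n : ℕ) (π φ : Equiv.Perm (Fin n)) (hne : π ≠ φ) :
    ∃ (ψ : Equiv.Perm (Fin n)) (p : Fin n × Fin n), (Gn n).Adj π ψ ∧ p ∈ dsc n π φ ∧
      dsc n ψ φ = (dsc n π φ).erase p := by
  obtain ⟨a, b, hb, hd⟩ := exists_descent n (π.symm.trans φ) (by
    intro h
    apply hne
    refine Equiv.ext fun x => ?_
    have h2 := congrArg (fun (e : Equiv.Perm (Fin n)) => e (π x)) h
    simpa using h2.symm)
  set h : Equiv.Perm (Fin n) := π.symm.trans φ with hh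
  set s : Equiv.Perm (Fin n) := Equiv.swap a b with hs
  set ψ : Equiv.Perm (Fin n) := π.trans s with hψ
  have hab : a ≠ b := fun hq => by rw [hq] at hb; omega
  set i : Fin n := π.symm a with hi
  set j : Fin n := π.symm b with hj
  have hij : i ≠ j := fun hq => hab (by
    have := congrArg π hq
    simpa [hi, hj] using this)
  set p : Fin n × Fin n := if (i : ℕ) < (j : ℕ) then (i, j) else (j, i) with hp
  have hπi : π i = a := by simp [hi]
  have hπj : π j = b := by simp [hj]
  have hφi : φ i = h a := by simp [hh, hi]
  have hφj : φ j = h b := by simp [hh, hj]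
  -- membership characterization for dsc π ψ
  have hmem : ∀ q : Fin n × Fin n, q ∈ dsc n π ψ ↔ q.1 < q.2 ∧
      ((q.1 = i ∧ q.2 = j) ∨ (q.1 = j ∧ q.2 = i)) := by
    intro q
    rw [dsc, Finset.mem_filter]
    simp only [pairs, Finset.mem_filter, Finset.mem_univ, true_and]
    constructor
    · rintro ⟨hq, hprod⟩
      refine ⟨hq, ?_⟩
      have hne12 : π q.1 ≠ π q.2 := fun hEq => (ne_of_lt hq) (π.injective hEq)
      have hψ1 : ψ q.1 = s (π q.1) := rfl
      have hψ2 : ψ q.2 = s (π q.2) := rfl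
      rw [hψ1, hψ2, mul_comm] at hprod
      rw [swap_sign n a b (π q.1) (π q.2) hb hne12] at hprod
      rcases hprod with ⟨h1, h2⟩ | ⟨h1, h2⟩
      · left
        constructor
        · rw [hi, ← h1]; simp
        · rw [hj, ← h2]; simp
      · right
        constructor
        · rw [hj, ← h1]; simp
        · rw [hi, ← h2]; simp
    · rintro ⟨hq, hcase⟩
      refine ⟨hq, ?_⟩
      have hne12 : π q.1 ≠ π q.2 := fun hEq => (ne_of_lt hq) (π.injective hEq)
      have hψ1 : ψ q.1 = s (π q.1) := rfl
      have hψ2 : ψ q.2 = s (π q.2) := rfl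
      rw [hψ1, hψ2, mul_comm, swap_sign n a b (π q.1) (π q.2) hb hne12]
      rcases hcase with ⟨h1, h2⟩ | ⟨h1, h2⟩
      · left; rw [h1, h2, hπi, hπj]; exact ⟨rfl, rfl⟩
      · right; rw [h1, h2, hπj, hπi]; exact ⟨rfl, rfl⟩
  have hij' : (i : ℕ) ≠ (j : ℕ) := fun hq => hij (Fin.ext hq)
  have hsingle : dsc n π ψ = {p} := by
    ext q
    rw [hmem, Finset.mem_singleton]
    rcases lt_or_gt_of_ne hij' with hlt | hgt
    · rw [hp, if_pos hlt]
      constructor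
      · rintro ⟨hq, ⟨h1, h2⟩ | ⟨h1, h2⟩⟩
        · rw [Prod.ext_iff]; exact ⟨h1, h2⟩
        · exfalso; rw [h1, h2] at hq; have h3 := Fin.lt_def.mp hq; omega
      · rintro rfl
        exact ⟨hlt, Or.inl ⟨rfl, rfl⟩⟩
    · rw [hp, if_neg (by omega)]
      constructor
      · rintro ⟨hq, ⟨h1, h2⟩ | ⟨h1, h2⟩⟩
        · exfalso; rw [h1, h2] at hq; have h3 := Fin.lt_def.mp hq; omega
        · rw [Prod.ext_iff]; exact ⟨h1, h2⟩
      · rintro rfl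
        exact ⟨hgt, Or.inr ⟨rfl, rfl⟩⟩
  have hbz : ((b : ℕ) : ℤ) - ((a : ℕ) : ℤ) = 1 := by omega
  have hdz : ((h b : Fin n) : ℕ) < ((h a : Fin n) : ℕ) := hd
  have hpmem : p ∈ dsc n π φ := by
    rw [dsc, Finset.mem_filter]
    simp only [pairs, Finset.mem_filter, Finset.mem_univ, true_and]
    rcases lt_or_gt_of_ne hij' with hlt | hgt
    · rw [hp, if_pos hlt]
      refine ⟨hlt, ?_⟩
      simp only [hπi, hπj, hφi, hφj]
      rw [hbz, one_mul]
      omega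
    · rw [hp, if_neg (by omega)]
      refine ⟨hgt, ?_⟩
      simp only [hπi, hπj, hφi, hφj]
      have haz : ((a : ℕ) : ℤ) - ((b : ℕ) : ℤ) = -1 := by omega
      rw [haz]
      have hx : (-1 : ℤ) * (((h a : Fin n) : ℕ) - ((h b : Fin n) : ℕ) : ℤ) =
        ((h b : Fin n) : ℕ) - ((h a : Fin n) : ℕ) := by ring
      rw [hx]
      omega
  refine ⟨ψ, p, ?_, hpmem, ?_⟩
  · show (dsc n π ψ).card = 1
    rw [hsingle]
    exact Finset.card_singleton p
  · rw [dsc_symmDiff n ψ π φ, dsc_comm n ψ π, hsingle, symmDiff_singleton_erase p _ hpmem]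

lemma dsc_self (n : ℕ) (π : Equiv.Perm (Fin n)) : dsc n π π = ∅ := by
  ext p
  simp only [dsc, Finset.mem_filter, Finset.notMem_empty, iff_false, not_and]
  intro _
  exact not_lt.mpr (mul_self_nonneg _)

lemma exists_walk (n : ℕ) (k : ℕ) : ∀ (π φ : Equiv.Perm (Fin n)),
    (dsc n π φ).card = k → ∃ w : (Gn n).Walk π φ, w.length = k := by
  induction k with
  | zero =>
    intro π φ hcard
    have hpe : π = φ := by
      by_contra hne
      obtain ⟨ψ, p, _, hp, _⟩ := step_lemma n π φ hne
      rw [Finset.card_eq_zero.mp hcard] at hp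
      exact absurd hp (Finset.notMem_empty p)
    subst hpe
    exact ⟨SimpleGraph.Walk.nil, rfl⟩
  | succ k ih =>
    intro π φ hcard
    have hne : π ≠ φ := by
      rintro rfl
      rw [dsc_self] at hcard
      simp at hcard
    obtain ⟨ψ, p, hadj, hp, he⟩ := step_lemma n π φ hne
    have hc : (dsc n ψ φ).card = k := by
      rw [he, Finset.card_erase_of_mem hp, hcard]; omega
    obtain ⟨w, hw⟩ := ih ψ φ hc
    exact ⟨SimpleGraph.Walk.cons hadj w, by simp [hw]⟩

lemma walk_lower (n : ℕ) (π φ : Equiv.Perm (Fin n)) (w : (Gn n).Walk π φ) :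
    (dsc n π φ).card ≤ w.length := by
  induction w with
  | nil => simp [dsc_self]
  | @cons u v w hadj t ih =>
    have h1 : (dsc n u v).card = 1 := hadj
    have h2 : (dsc n u w).card ≤ (dsc n u v).card + (dsc n v w).card := by
      rw [dsc_symmDiff n u v w]
      exact le_trans (Finset.card_le_card symmDiff_le_sup) (Finset.card_union_le _ _)
    simp only [SimpleGraph.Walk.length_cons]
    omega

lemma dist_eq_card (n : ℕ) (π φ : Equiv.Perm (Fin n)) :
    (Gn n).dist π φ = (dsc n π φ).card := by
  obtain ⟨w, hw⟩ := exists_walk n (dsc n π φ).card π φ rfl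
  refine le_antisymm (hw ▸ SimpleGraph.dist_le w) ?_
  obtain ⟨w', hw'⟩ := SimpleGraph.Reachable.exists_walk_length_eq_dist ⟨w⟩
  exact hw' ▸ walk_lower n π φ w'

lemma symmDiff_singleton_not_mem {α : Type*} [DecidableEq α] (p : α) (t : Finset α)
    (hp : p ∉ t) : symmDiff t ({p} : Finset α) = insert p t := by
  ext q
  simp only [Finset.mem_symmDiff, Finset.mem_singleton, Finset.mem_insert]
  constructor
  · rintro (⟨hq, hq'⟩ | ⟨rfl, _⟩)
    · exact Or.inr hq
    · exact Or.inl rfl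
  · rintro (rfl | hq)
    · exact Or.inr ⟨rfl, hp⟩
    · exact Or.inl ⟨hq, fun h => hp (h ▸ hq)⟩


/-- Let `π ≠ φ` be vertices of `G_n` and let `π = ψ 0, ψ 1, …, ψ m = φ` be a
path in `G_n` (consecutive vertices adjacent, all vertices distinct), with
`lab k` the unique element of `dsc(ψ k, ψ (k+1))`. Then the path is a
shortest path, i.e. `m = d_{G_n}(π,φ)`, iff the labels
`lab 0, …, lab (m-1)` are pairwise distinct. -/
theorem shortest_path_iff_distinct_labels (n m : ℕ) (hm : 1 ≤ m)
    (π φ : Equiv.Perm (Fin n)) (hne : π ≠ φ)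
    (ψ : ℕ → Equiv.Perm (Fin n)) (lab : ℕ → Fin n × Fin n)
    (h0 : ψ 0 = π) (hlast : ψ m = φ)
    (hadj : ∀ k < m, (Gn n).Adj (ψ k) (ψ (k + 1)))
    (hinj : ∀ k ≤ m, ∀ l ≤ m, ψ k = ψ l → k = l)
    (hlab : ∀ k < m, dsc n (ψ k) (ψ (k + 1)) = {lab k}) :
    m = (Gn n).dist π φ ↔ (∀ k < m, ∀ l < m, lab k = lab l → k = l) := by
  have hsub : ∀ k ≤ m, dsc n (ψ 0) (ψ k) ⊆ (Finset.range k).image lab := by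
    intro k
    induction k with
    | zero => intro _; rw [dsc_self]; exact Finset.empty_subset _
    | succ k ih =>
      intro hk
      have ih' := ih (by omega)
      rw [dsc_symmDiff n (ψ 0) (ψ k) (ψ (k+1)), hlab k (by omega)]
      intro q hq
      rw [Finset.mem_symmDiff] at hq
      rw [Finset.mem_image]
      rcases hq with ⟨hq, _⟩ | ⟨hq, _⟩
      · obtain ⟨t, ht, rfl⟩ := Finset.mem_image.mp (ih' hq)
        exact ⟨t, Finset.mem_range.mpr (by have := Finset.mem_range.mp ht; omega), rfl⟩
      · exact ⟨k, Finset.mem_range.mpr (by omega), (Finset.mem_singleton.mp hq).symm⟩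
  constructor
  · intro hdist
    by_contra hdup
    push_neg at hdup
    obtain ⟨k, hk, l, hl, heq, hkl⟩ := hdup
    have himg : (Finset.range m).image lab = ((Finset.range m).erase k).image lab := by
      apply Finset.Subset.antisymm
      · intro x hx
        obtain ⟨t, ht, rfl⟩ := Finset.mem_image.mp hx
        rcases eq_or_ne t k with rfl | htk
        · exact Finset.mem_image.mpr ⟨l, Finset.mem_erase.mpr
            ⟨fun h => hkl h.symm, Finset.mem_range.mpr hl⟩, heq.symm⟩
        · exact Finset.mem_image.mpr ⟨t, Finset.mem_erase.mpr ⟨htk, ht⟩, rfl⟩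
      · exact Finset.image_subset_image (Finset.erase_subset _ _)
    have hcard : (dsc n π φ).card ≤ m - 1 := by
      calc (dsc n π φ).card ≤ ((Finset.range m).image lab).card :=
            Finset.card_le_card (by rw [← h0, ← hlast]; exact hsub m le_rfl)
        _ = (((Finset.range m).erase k).image lab).card := by rw [himg]
        _ ≤ ((Finset.range m).erase k).card := Finset.card_image_le
        _ = m - 1 := by rw [Finset.card_erase_of_mem (Finset.mem_range.mpr hk),
            Finset.card_range]
    rw [hdist, dist_eq_card] at *
    omega
  · intro hdistinct
    have hcard : ∀ k ≤ m, (dsc n (ψ 0) (ψ k)).card = k := by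
      intro k
      induction k with
      | zero => intro _; rw [dsc_self]; rfl
      | succ k ih =>
        intro hk
        have ih' := ih (by omega)
        have hnotmem : lab k ∉ dsc n (ψ 0) (ψ k) := by
          intro hmem
          obtain ⟨t, ht, hte⟩ := Finset.mem_image.mp (hsub k (by omega) hmem)
          have htm := Finset.mem_range.mp ht
          have := hdistinct t (by omega) k (by omega) hte
          omega
        rw [dsc_symmDiff n (ψ 0) (ψ k) (ψ (k+1)), hlab k (by omega),
          symmDiff_singleton_not_mem _ _ hnotmem,
          Finset.card_insert_of_notMem hnotmem, ih']
    rw [dist_eq_card, ← h0, ← hlast, hcard m le_rfl]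
end
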